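/- Define N_n(x) as the polynomials satisfying N_0 = 1 and N_n(x) = x^n A_n^{(2)}(1/x), where A_n^{(2)}(x) satisfies A_{n+1}^{(2)}(x) = (1+2nx)A_n^{(2)}(x) + 2x(1-x)(A_n^{(2)})'(x) with A_0^{(2)} = A_1^{(2)} = 1. Then (2x·d/dx)^n (1-x)^{-1/2} = N_n(x)/((1-x)^n √(1-x)) for all n ≥ 1. -/

import Mathlib

/-- With `A_n = A_n^{(2)}` the `1/2`-Eulerian polynomials and `N_n(x) = x^n A_n(1/x)`
(`N_0 = 1`), one has `(2x d/dx)^n (1-x)^{-1/2} = N_n(x)/((1-x)^n √(1-x))` on `(0,1)`. -/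
theorem twoxD_pow_left_ascent_plateau (A : ℕ → Polynomial ℝ) (h0 : A 0 = 1) (h1 : A 1 = 1)
    (hrec : ∀ n : ℕ, 1 ≤ n → A (n + 1) =
        (1 + Polynomial.C ((2 * n : ℕ) : ℝ) * Polynomial.X) * A n
          + Polynomial.C (2 : ℝ) * Polynomial.X * (1 - Polynomial.X)
              * Polynomial.derivative (A n))
    (N : ℕ → Polynomial ℝ) (hN0 : N 0 = 1)
    (hN : ∀ n : ℕ, ∀ x : ℝ, x ≠ 0 → (N n).eval x = x ^ n * (A n).eval (1 / x))
    (n : ℕ) (hn : 1 ≤ n) (x : ℝ) (hx : x ∈ Set.Ioo (0 : ℝ) 1) :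
    ((fun g : ℝ → ℝ => fun y => 2 * y * deriv g y)^[n]
        (fun y => (1 - y) ^ (-(1 / 2) : ℝ))) x
      = (N n).eval x / ((1 - x) ^ n * Real.sqrt (1 - x)) := by
  -- recurrence also at n = 0
  have hrec' : ∀ m : ℕ, A (m + 1) =
      (1 + Polynomial.C ((2 * m : ℕ) : ℝ) * Polynomial.X) * A m
        + Polynomial.C (2 : ℝ) * Polynomial.X * (1 - Polynomial.X)
            * Polynomial.derivative (A m) := by
    intro m
    rcases m with _ | k
    · simp [h0, h1]
    · exact hrec (k + 1) (Nat.succ_le_succ (Nat.zero_le k))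
  have key : ∀ m : ℕ, ∀ y : ℝ, y ∈ Set.Ioo (0 : ℝ) 1 →
      ((fun g : ℝ → ℝ => fun y => 2 * y * deriv g y)^[m]
          (fun y => (1 - y) ^ (-(1 / 2) : ℝ))) y
        = y ^ m * (A m).eval y⁻¹ * Real.sqrt (1 - y) / (1 - y) ^ (m + 1) := by
    intro m
    induction m with
    | zero =>
      intro y hy
      have h1y : (0:ℝ) < 1 - y := by linarith [hy.2]
      have hs : Real.sqrt (1 - y) ≠ 0 := ne_of_gt (Real.sqrt_pos.mpr h1y)
      have hss : Real.sqrt (1 - y) * Real.sqrt (1 - y) = 1 - y :=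
        Real.mul_self_sqrt h1y.le
      simp only [Function.iterate_zero_apply, h0, Polynomial.eval_one, pow_zero, pow_one,
        one_mul, mul_one]
      rw [Real.rpow_neg h1y.le, ← Real.sqrt_eq_rpow]
      field_simp
      rw [zero_add, pow_one, Real.sq_sqrt h1y.le]
    | succ m ih =>
      intro y hy
      obtain ⟨hy0, hy1⟩ := hy
      have h1y : (0:ℝ) < 1 - y := by linarith
      have hyne : y ≠ 0 := ne_of_gt hy0
      have h1yne : (1:ℝ) - y ≠ 0 := ne_of_gt h1y
      have hspos : 0 < Real.sqrt (1 - y) := Real.sqrt_pos.mpr h1y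
      have hsne : Real.sqrt (1 - y) ≠ 0 := ne_of_gt hspos
      have hss : Real.sqrt (1 - y) ^ 2 = 1 - y := Real.sq_sqrt h1y.le
      rw [Function.iterate_succ_apply']
      have heq : ((fun g : ℝ → ℝ => fun y => 2 * y * deriv g y)^[m]
          (fun y => (1 - y) ^ (-(1 / 2) : ℝ)))
          =ᶠ[nhds y] fun z => z ^ m * (A m).eval z⁻¹ * Real.sqrt (1 - z) / (1 - z) ^ (m + 1) := by
        filter_upwards [Ioo_mem_nhds hy0 hy1] with z hz using ih z hz
      have hlin : HasDerivAt (fun z : ℝ => 1 - z) (-1) y := by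
        simpa using (hasDerivAt_id y).const_sub (1:ℝ)
      have hinv : HasDerivAt (fun z : ℝ => (A m).eval z⁻¹)
          ((A m).derivative.eval y⁻¹ * (-(y ^ 2)⁻¹)) y :=
        ((A m).hasDerivAt y⁻¹).comp y (hasDerivAt_inv hyne)
      have hu : HasDerivAt (fun z : ℝ => z ^ m * (A m).eval z⁻¹)
          ((m : ℝ) * y ^ (m - 1) * (A m).eval y⁻¹
            + y ^ m * ((A m).derivative.eval y⁻¹ * (-(y ^ 2)⁻¹))) y :=
        (hasDerivAt_pow m y).mul hinv
      have hsder : HasDerivAt (fun z : ℝ => Real.sqrt (1 - z))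
          (1 / (2 * Real.sqrt (1 - y)) * (-1)) y :=
        (Real.hasDerivAt_sqrt h1yne).comp y hlin
      have hw : HasDerivAt (fun z : ℝ => (1 - z) ^ (m + 1))
          (((m : ℝ) + 1) * (1 - y) ^ m * (-1)) y := by
        have := hlin.fun_pow (m + 1)
        simpa using this
      have hG : HasDerivAt (fun z : ℝ =>
          z ^ m * (A m).eval z⁻¹ * Real.sqrt (1 - z) / (1 - z) ^ (m + 1)) _ y :=
        (hu.fun_mul hsder).div hw (pow_ne_zero _ h1yne)
      rw [heq.deriv_eq, hG.deriv]
      rw [hrec' m]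
      simp only [Polynomial.eval_add, Polynomial.eval_mul, Polynomial.eval_one,
        Polynomial.eval_C, Polynomial.eval_X, Polynomial.eval_sub, Nat.cast_mul,
        Nat.cast_ofNat]
      set P := (A m).eval y⁻¹ with hP
      set Q := (A m).derivative.eval y⁻¹ with hQ
      set s := Real.sqrt (1 - y) with hsdef
      have hmy : (m : ℝ) * y ^ (m - 1) * y = (m : ℝ) * y ^ m := by
        rcases m with _ | k
        · simp
        · simp [pow_succ]; ring
      rcases m with _ | k
      · simp only [Nat.cast_zero, zero_mul, pow_zero, one_mul, zero_add, mul_zero,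
          Nat.zero_eq, Nat.cast_ofNat, Nat.cast_one]
        rw [← hss]
        field_simp
        linear_combination (-2 * Q * s ^ 4) * hss
      · simp only [Nat.add_sub_cancel, Nat.cast_add, Nat.cast_one]
        rw [← hss]
        field_simp
        linear_combination ((s ^ 2) ^ (2 * k + 5) * y * y ^ (k + 1)
          * (2 * y * ((k : ℝ) + 1) * P - 2 * Q)) * hss
  have hx0 := hx.1
  have hx1 := hx.2
  have h1x : (0:ℝ) < 1 - x := by linarith
  have hspos : 0 < Real.sqrt (1 - x) := Real.sqrt_pos.mpr h1x
  have hss : Real.sqrt (1 - x) * Real.sqrt (1 - x) = 1 - x := Real.mul_self_sqrt h1x.le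
  rw [key n x hx, hN n x (ne_of_gt hx0), one_div]
  rw [pow_succ]
  field_simp
  linear_combination (Polynomial.eval (1 / x) (A n)) * hss
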